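/- In the Temperley-Lieb algebra TL_n(δ) with generators e_1,...,e_{n-1}, for |i - j| ≥ 2 and any word w in the generators, the elements e_i e_j and e_j e_i are equal; moreover the Jones-Wenzl projections f_n, defined by f_1 = 1 and f_{n+1} = f_n⊗1 - ([n]/[n+1])·f_n e_n f_n (where δ = [2] = q + q^{-1} and [k] are quantum integers, assumed nonzero for k ≤ n+1), satisfy f_n·e_i = e_i·f_n = 0 for all 1 ≤ i ≤ n-1, and f_n² = f_n. -/

import Mathlib

/-- The quantum integer `[k] = (q^k - q^{-k})/(q - q^{-1})`. -/
noncomputable def qint {F : Type*} [Field F] (q : F) (k : ℤ) : F :=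
  (q ^ k - q ^ (-k)) / (q - q⁻¹)

/-- In the Temperley-Lieb algebra `TL(δ)`, `δ = q + q⁻¹`, with generators `e i` (`i ≥ 1`)
and Jones-Wenzl projections `f n` defined by `f 1 = 1`,
`f (n+1) = f n - ([n]/[n+1])·(f n · e n · f n)`, we have: distant generators commute,
`f n · e i = e i · f n = 0` for `1 ≤ i ≤ n-1`, and `f n` is idempotent. -/
theorem jones_wenzl {F : Type*} [Field F] {A : Type*} [Ring A] [Algebra F A]
    (q : F) (hq0 : q ≠ 0) (hq1 : q ^ 2 ≠ 1)
    (hqi : ∀ k : ℕ, 1 ≤ k → qint q k ≠ 0)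
    (e : ℕ → A) (f : ℕ → A)
    (he1 : ∀ i, 1 ≤ i → e i * e i = (q + q⁻¹) • e i)
    (he2 : ∀ i, 1 ≤ i → e i * e (i + 1) * e i = e i)
    (he3 : ∀ i, 1 ≤ i → e (i + 1) * e i * e (i + 1) = e (i + 1))
    (he4 : ∀ i j, 1 ≤ i → 1 ≤ j → (i + 1 < j ∨ j + 1 < i) → e i * e j = e j * e i)
    (hf1 : f 1 = 1)
    (hf2 : ∀ n, 1 ≤ n → f (n + 1) = f n - (qint q n / qint q (n + 1)) • (f n * e n * f n)) :
    (∀ i j, 1 ≤ i → 1 ≤ j → (i + 1 < j ∨ j + 1 < i) → e i * e j = e j * e i) ∧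
    (∀ n i, 1 ≤ i → i + 1 ≤ n → f n * e i = 0 ∧ e i * f n = 0) ∧
    (∀ n, 1 ≤ n → f n * f n = f n) := by
  -- scalar preliminaries
  have hd : q - q⁻¹ ≠ 0 := by
    intro h
    apply hq1
    have h' : q = q⁻¹ := by rwa [sub_eq_zero] at h
    rw [pow_two]
    nth_rewrite 2 [h']
    exact mul_inv_cancel₀ hq0
  have hq1' : qint q 1 = 1 := by
    simp only [qint, zpow_one, zpow_neg, zpow_one]
    exact div_self hd
  have hq2' : qint q 2 = q + q⁻¹ := by
    simp only [qint]
    rw [div_eq_iff hd, zpow_neg, zpow_two]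
    field_simp
    ring
  have hrec : ∀ n : ℕ, (q + q⁻¹) * qint q ((n:ℤ) + 1) = qint q ((n:ℤ) + 2) + qint q (n:ℤ) := by
    intro n
    simp only [qint]
    have e1 : q ^ ((n:ℤ)+1) = q ^ n * q := by
      rw [zpow_add₀ hq0, zpow_natCast, zpow_one]
    have e2 : q ^ (-((n:ℤ)+1)) = (q ^ n)⁻¹ * q⁻¹ := by
      rw [neg_add, zpow_add₀ hq0, zpow_neg, zpow_natCast, zpow_neg_one]
    have e3 : q ^ ((n:ℤ)+2) = q ^ n * (q * q) := by
      rw [zpow_add₀ hq0, zpow_natCast, zpow_two]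
    have e4 : q ^ (-((n:ℤ)+2)) = (q ^ n)⁻¹ * (q * q)⁻¹ := by
      rw [neg_add, zpow_add₀ hq0, zpow_neg, zpow_neg, zpow_natCast, zpow_two]
    have e5 : q ^ (-(n:ℤ)) = (q ^ n)⁻¹ := by rw [zpow_neg, zpow_natCast]
    rw [e1, e2, e3, e4, e5, mul_div_assoc', ← add_div]
    congr 1
    have hqn : q ^ n ≠ 0 := pow_ne_zero _ hq0
    field_simp
    simp only [zpow_natCast]
    ring
  -- distant generators commute with Jones-Wenzl projections
  have comm : ∀ n, 1 ≤ n → ∀ j, n + 1 ≤ j → Commute (e j) (f n) := by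
    intro n
    induction n with
    | zero => intro h; exact absurd h (by omega)
    | succ m ih =>
      intro _ j hj
      rcases Nat.eq_zero_or_pos m with h0 | hm
      · subst h0; rw [hf1]; exact Commute.one_right _
      · rw [hf2 m hm]
        have hfm : Commute (e j) (f m) := ih hm j (by omega)
        have hem : Commute (e j) (e m) := (he4 m j hm (by omega) (Or.inl (by omega))).symm
        exact hfm.sub_right (((hfm.mul_right hem).mul_right hfm).smul_right _)
  -- the main induction
  have main : ∀ n, 1 ≤ n →
      (f n * f n = f n) ∧
      (∀ i, 1 ≤ i → i + 1 ≤ n → f n * e i = 0 ∧ e i * f n = 0) ∧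
      (f n * e n * f n * e n = (qint q (n+1) / qint q n) • (f n * e n)) ∧
      (e n * f n * e n * f n = (qint q (n+1) / qint q n) • (e n * f n)) := by
    intro n hn
    induction n, hn using Nat.le_induction with
    | base =>
      refine ⟨by rw [hf1, one_mul], fun i hi hin => absurd hin (by omega), ?_, ?_⟩
      · simp only [hf1, one_mul, mul_one]
        rw [he1 1 le_rfl]
        norm_num [hq1', hq2']
      · simp only [hf1, one_mul, mul_one]
        rw [he1 1 le_rfl]
        norm_num [hq1', hq2']
    | succ n hn ih =>
      obtain ⟨idem, ann, B1, B2⟩ := ih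
      have hfr : f (n+1) = f n - (qint q n / qint q (n+1)) • (f n * e n * f n) := hf2 n hn
      have hz1 : qint q (n:ℤ) ≠ 0 := hqi n hn
      have hz2 : qint q ((n:ℤ)+1) ≠ 0 := by
        have := hqi (n+1) (by omega); push_cast at this; exact this
      have key1 : (qint q (n:ℤ) / qint q ((n:ℤ)+1)) * (qint q ((n:ℤ)+1) / qint q (n:ℤ)) = 1 := by
        field_simp
      have hkeyn : (q + q⁻¹) - qint q (n:ℤ) / qint q ((n:ℤ)+1) = qint q ((n:ℤ)+2) / qint q ((n:ℤ)+1) := by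
        rw [eq_div_iff hz2, sub_mul, div_mul_cancel₀ _ hz2]
        linear_combination hrec n
      have annLn : f (n+1) * e n = 0 := by
        rw [hfr, sub_mul, smul_mul_assoc, B1, smul_smul, key1, one_smul, sub_self]
      have annRn : e n * f (n+1) = 0 := by
        rw [hfr, mul_sub, mul_smul_comm,
          (by simp only [mul_assoc] : e n * (f n * e n * f n) = e n * f n * e n * f n),
          B2, smul_smul, key1, one_smul, sub_self]
      have annlow : ∀ i, 1 ≤ i → i + 1 ≤ n → f (n+1) * e i = 0 ∧ e i * f (n+1) = 0 := by
        intro i hi hin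
        obtain ⟨aL, aR⟩ := ann i hi hin
        constructor
        · rw [hfr, sub_mul, smul_mul_assoc,
            (by simp only [mul_assoc] : f n * e n * f n * e i = f n * e n * (f n * e i)), aL]
          simp
        · rw [hfr, mul_sub, mul_smul_comm,
            (by simp only [mul_assoc] : e i * (f n * e n * f n) = (e i * f n) * (e n * f n)), aR]
          simp
      have ffn : f (n+1) * f n = f (n+1) := by
        rw [hfr, sub_mul, smul_mul_assoc,
          (by simp only [mul_assoc] : f n * e n * f n * f n = f n * e n * (f n * f n)), idem]
      have fnf : f n * f (n+1) = f (n+1) := by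
        rw [hfr, mul_sub, mul_smul_comm,
          (by simp only [mul_assoc] : f n * (f n * e n * f n) = f n * f n * e n * f n), idem]
      have idem1 : f (n + 1) * f (n + 1) = f (n + 1) := by
        calc f (n+1) * f (n+1)
            = f (n+1) * f n - (qint q n / qint q (n+1)) • (f (n+1) * f n * e n * f n) := by
              nth_rewrite 2 [hfr]
              rw [mul_sub, mul_smul_comm]
              simp only [mul_assoc]
          _ = f (n+1) := by rw [ffn, annLn, zero_mul, smul_zero, sub_zero]
      have hc : e (n+1) * f n = f n * e (n+1) := (comm n hn (n+1) le_rfl).eq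
      have h2 : e (n+1) * (f n * e n * f n) * e (n+1) = f n * e (n+1) := by
        calc e (n+1) * (f n * e n * f n) * e (n+1)
            = (e (n+1) * f n) * e n * (f n * e (n+1)) := by simp only [mul_assoc]
          _ = (e (n+1) * f n) * e n * (e (n+1) * f n) := by rw [← hc]
          _ = f n * (e (n+1) * e n * e (n+1)) * f n := by
              nth_rewrite 1 [hc]
              simp only [mul_assoc]
          _ = f n * e (n+1) * f n := by rw [he3 n hn]
          _ = f n * (f n * e (n+1)) := by rw [mul_assoc, hc]
          _ = f n * e (n+1) := by rw [← mul_assoc, idem]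
      have h1 : e (n+1) * f n * e (n+1) = (q + q⁻¹) • (f n * e (n+1)) := by
        rw [hc, mul_assoc, he1 (n+1) (by omega), mul_smul_comm]
      have hM : e (n+1) * f (n+1) * e (n+1)
          = (qint q ((n:ℤ)+2) / qint q ((n:ℤ)+1)) • (f n * e (n+1)) := by
        rw [hfr, mul_sub, sub_mul, mul_smul_comm, smul_mul_assoc, h1, h2, ← sub_smul, hkeyn]
      have hsc : qint q (((n:ℕ)+1:ℕ):ℤ) = qint q ((n:ℤ)+1) := by push_cast; ring_nf
      refine ⟨idem1, ?_, ?_, ?_⟩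
      · intro i hi hin
        rcases eq_or_lt_of_le hin with h | h
        · have hin' : i = n := by omega
          subst hin'
          exact ⟨annLn, annRn⟩
        · exact annlow i hi (by omega)
      · calc f (n+1) * e (n+1) * f (n+1) * e (n+1)
            = f (n+1) * (e (n+1) * f (n+1) * e (n+1)) := by simp only [mul_assoc]
          _ = (qint q ((n:ℤ)+2) / qint q ((n:ℤ)+1)) • (f (n+1) * (f n * e (n+1))) := by
              rw [hM, mul_smul_comm]
          _ = (qint q ((n:ℤ)+2) / qint q ((n:ℤ)+1)) • (f (n+1) * e (n+1)) := by
              rw [← mul_assoc, ffn]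
          _ = (qint q (((n+1):ℕ) + 1) / qint q ((n+1 : ℕ))) • (f (n+1) * e (n+1)) := by
              norm_cast
      · calc e (n+1) * f (n+1) * e (n+1) * f (n+1)
            = (qint q ((n:ℤ)+2) / qint q ((n:ℤ)+1)) • (f n * e (n+1) * f (n+1)) := by
              rw [hM, smul_mul_assoc]
          _ = (qint q ((n:ℤ)+2) / qint q ((n:ℤ)+1)) • (e (n+1) * f (n+1)) := by
              rw [← hc, mul_assoc, fnf]
          _ = (qint q (((n+1):ℕ) + 1) / qint q ((n+1 : ℕ))) • (e (n+1) * f (n+1)) := by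
              norm_cast
  refine ⟨he4, ?_, ?_⟩
  · intro n i hi hin
    exact (main n (by omega)).2.1 i hi hin
  · intro n hn
    exact (main n hn).1
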